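/- arXiv:2006.15316 — 2 statements merged into one kernel-verified Lean document; each statement's English description precedes it below -/
import Mathlib

section
/- For all real λ with |λ| ≤ 1/4, we have e^{-λ}/√(1-2λ) ≤ e^{2λ²}. -/
lemma keypoly (x : ℝ) (hx1 : -(1/2) ≤ x) (hx2 : x ≤ 1/2) :
    (x - x^2) + (x - x^2)^2/2 + (x - x^2)^3/6 + (x - x^2)^4 * (5/96) ≤ x := by
  nlinarith [sq_nonneg x, sq_nonneg (x - x^2), sq_nonneg (x*(x - x^2)),
    mul_nonneg (mul_nonneg (by linarith : (0:ℝ) ≤ x + 1/2) (by linarith : (0:ℝ) ≤ 1/2 - x)) (sq_nonneg x),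
    mul_nonneg (mul_nonneg (by linarith : (0:ℝ) ≤ x + 1/2) (by linarith : (0:ℝ) ≤ 1/2 - x)) (sq_nonneg (x*x)),
    sq_nonneg ((x - x^2)^2), sq_nonneg (x*x)]

lemma key (x : ℝ) (hx1 : -(1/2) ≤ x) (hx2 : x ≤ 1/2) : Real.exp (x - x^2) ≤ 1 + x := by
  have hxsq : x^2 ≤ 1/4 := by nlinarith
  have htabs : |x - x^2| ≤ 1 := by rw [abs_le]; constructor <;> nlinarith
  have hb := Real.exp_bound htabs (n := 4) (by norm_num)
  rw [Finset.sum_range_succ, Finset.sum_range_succ, Finset.sum_range_succ,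
    Finset.sum_range_succ, Finset.sum_range_zero] at hb
  norm_num [Nat.factorial] at hb
  have h1 := (abs_sub_le_iff.1 hb).1
  have habs4 : |x - x^2|^4 = (x - x^2)^4 := by
    rw [← abs_pow, abs_of_nonneg (by positivity)]
  rw [habs4] at h1
  have := keypoly x hx1 hx2
  nlinarith [h1, this]

/-- For all real `λ` with `|λ| ≤ 1/4`,
`e^{-λ} / √(1 - 2λ) ≤ e^{2λ²}`. -/
theorem exp_div_sqrt_le_exp_sq (l : ℝ) (h : |l| ≤ 1 / 4) :
    Real.exp (-l) / Real.sqrt (1 - 2 * l) ≤ Real.exp (2 * l ^ 2) := by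
  have h1 : -(1/4) ≤ l := neg_le_of_abs_le h
  have h2 : l ≤ 1/4 := le_of_abs_le h
  have hpos : (0:ℝ) < 1 - 2 * l := by linarith
  have hk := key (-2*l) (by linarith) (by linarith)
  have hk' : Real.exp (-2*l - 4*l^2) ≤ 1 - 2*l := by
    have e : (-2*l) - (-2*l)^2 = -2*l - 4*l^2 := by ring
    rw [e] at hk; linarith
  have hsq : Real.exp (-l - 2*l^2) ≤ Real.sqrt (1 - 2*l) := by
    rw [show Real.exp (-l - 2*l^2) = Real.sqrt (Real.exp (-2*l - 4*l^2)) by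
      rw [show -2*l - 4*l^2 = (-l - 2*l^2) + (-l - 2*l^2) by ring, Real.exp_add, ← sq,
        Real.sqrt_sq (Real.exp_pos _).le]]
    exact Real.sqrt_le_sqrt hk'
  rw [div_le_iff₀ (Real.sqrt_pos.mpr (by linarith))]
  calc Real.exp (-l) = Real.exp (2*l^2) * Real.exp (-l - 2*l^2) := by
        rw [← Real.exp_add]; ring_nf
    _ ≤ Real.exp (2*l^2) * Real.sqrt (1 - 2*l) := by
        exact mul_le_mul_of_nonneg_left hsq (Real.exp_pos _).le
end

section
/- Let Γ be the one-step Riccati difference operator Γ(P) := τQ + (I+τA)ᵀP(I+τA) − (I+τA)ᵀPτB(R+τBᵀPB)⁻¹BᵀP(I+τA). Then for all positive semidefinite P, P', ‖Γ(P) − Γ(P')‖₂ ≤ (1 + τ‖R⁻¹‖₂‖B‖₂² max{‖P‖₂,‖P'‖₂})² (1+τ‖A‖₂)² ‖P − P'‖₂. -/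
open Matrix
open scoped Matrix.Norms.L2Operator RealInnerProductSpace

/-- The spectral norm (operator norm induced by Euclidean norms) of a real matrix. -/
noncomputable def sNorm {m n : ℕ} (A : Matrix (Fin m) (Fin n) ℝ) : ℝ :=
  ‖LinearMap.toContinuousLinearMap (Matrix.toEuclideanLin A)‖

/-- The one-step Riccati difference operator. -/
noncomputable def riccatiStep {n d : ℕ} (τ : ℝ) (Q A : Matrix (Fin n) (Fin n) ℝ)
    (R : Matrix (Fin d) (Fin d) ℝ) (B : Matrix (Fin n) (Fin d) ℝ)
    (P : Matrix (Fin n) (Fin n) ℝ) : Matrix (Fin n) (Fin n) ℝ :=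
  τ • Q + (1 + τ • A)ᵀ * P * (1 + τ • A)
    - (1 + τ • A)ᵀ * P * (τ • B) * (R + τ • (Bᵀ * P * B))⁻¹ * Bᵀ * P * (1 + τ • A)

section Aux

variable {n d : ℕ}

lemma sNorm_eq {m n : ℕ} (A : Matrix (Fin m) (Fin n) ℝ) : sNorm A = ‖A‖ := rfl

lemma opnorm_le_of_quadform {E : Type*} [NormedAddCommGroup E] [InnerProductSpace ℝ E]
    (T : E →L[ℝ] E) (hsym : ∀ x y : E, ⟪T x, y⟫ = ⟪x, T y⟫) {c : ℝ} (hc : 0 ≤ c)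
    (h : ∀ x : E, |⟪T x, x⟫| ≤ c * ‖x‖ ^ 2) : ‖T‖ ≤ c := by
  refine T.opNorm_le_bound hc (fun x => ?_)
  rcases eq_or_ne (T x) 0 with h0 | h0
  · simp [h0, mul_nonneg hc (norm_nonneg x)]
  rcases eq_or_ne x 0 with rfl | hx
  · simp
  have hTx : (0:ℝ) < ‖T x‖ := norm_pos_iff.mpr h0
  have hx' : (0:ℝ) < ‖x‖ := norm_pos_iff.mpr hx
  set y : E := (‖x‖ / ‖T x‖) • T x with hy
  have hny : ‖y‖ = ‖x‖ := by
    rw [hy, norm_smul, Real.norm_eq_abs, abs_of_nonneg (div_nonneg hx'.le hTx.le)]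
    field_simp
  have key : 4 * ⟪T x, y⟫ = ⟪T (x + y), x + y⟫ - ⟪T (x - y), x - y⟫ := by
    have h1 : ⟪T y, x⟫ = ⟪T x, y⟫ := by rw [hsym y x, real_inner_comm]
    simp only [map_add, map_sub, inner_add_add_self, inner_sub_sub_self,
      inner_add_left, inner_add_right, inner_sub_left, inner_sub_right]
    ring_nf
    rw [real_inner_comm y (T x)] at *
    linarith [h1]
  have hb : 4 * ⟪T x, y⟫ ≤ 4 * (c * ‖x‖ ^ 2) := by
    rw [key]
    have hpar : ‖x + y‖ ^ 2 + ‖x - y‖ ^ 2 = 2 * (‖x‖ ^ 2 + ‖y‖ ^ 2) := by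
      have := parallelogram_law_with_norm ℝ x y; nlinarith [this]
    have h1 : ⟪T (x+y), x+y⟫ ≤ c * ‖x + y‖ ^ 2 := (abs_le.mp (h (x+y))).2
    have h2 : -(c * ‖x - y‖ ^ 2) ≤ ⟪T (x-y), x-y⟫ := (abs_le.mp (h (x-y))).1
    rw [hny] at hpar
    nlinarith
  have hval : ⟪T x, y⟫ = ‖x‖ * ‖T x‖ := by
    rw [hy, real_inner_smul_right, real_inner_self_eq_norm_mul_norm]
    field_simp
  rw [hval] at hb
  have : ‖x‖ * ‖T x‖ ≤ c * (‖x‖ * ‖x‖) := by nlinarith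
  nlinarith

lemma euclid_inner_mulVec (M : Matrix (Fin n) (Fin n) ℝ) (x y : EuclideanSpace ℝ (Fin n)) :
    ⟪toEuclideanCLM (𝕜 := ℝ) M x, y⟫ =
      dotProduct (M *ᵥ (WithLp.equiv 2 _ x)) (WithLp.equiv 2 _ y) := by
  rw [EuclideanSpace.inner_eq_star_dotProduct, dotProduct_comm]
  rfl

lemma euclid_norm_sq (x : EuclideanSpace ℝ (Fin n)) :
    ‖x‖ ^ 2 = dotProduct (WithLp.equiv 2 _ x) (WithLp.equiv 2 _ x) := by
  rw [← real_inner_self_eq_norm_sq, EuclideanSpace.inner_eq_star_dotProduct]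
  simp

lemma mulVec_dot_symm (M : Matrix (Fin n) (Fin n) ℝ) (hS : Mᵀ = M) (a b : Fin n → ℝ) :
    dotProduct (M *ᵥ a) b = dotProduct (M *ᵥ b) a := by
  rw [dotProduct_comm, Matrix.dotProduct_mulVec, ← Matrix.mulVec_transpose, hS]

lemma sym_norm_le (S : Matrix (Fin n) (Fin n) ℝ) (hS : Sᵀ = S) {c : ℝ} (hc : 0 ≤ c)
    (h : ∀ x : Fin n → ℝ, |dotProduct x (S *ᵥ x)| ≤ c * dotProduct x x) :
    ‖S‖ ≤ c := by
  rw [Matrix.cstar_norm_def]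
  refine opnorm_le_of_quadform _ (fun x y => ?_) hc (fun x => ?_)
  · rw [euclid_inner_mulVec, real_inner_comm, euclid_inner_mulVec]
    exact mulVec_dot_symm S hS _ _
  · rw [euclid_inner_mulVec, euclid_norm_sq]
    set a := WithLp.equiv 2 _ x
    rw [dotProduct_comm]
    exact h a

lemma abs_quad_le (M : Matrix (Fin n) (Fin n) ℝ) (x : Fin n → ℝ) :
    |dotProduct x (M *ᵥ x)| ≤ ‖M‖ * dotProduct x x := by
  set xh : EuclideanSpace ℝ (Fin n) := (WithLp.equiv 2 _).symm x with hxh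
  have h1 : dotProduct x (M *ᵥ x) = ⟪toEuclideanCLM (𝕜 := ℝ) M xh, xh⟫ := by
    rw [euclid_inner_mulVec]
    simp [hxh, dotProduct_comm]
  have h2 : ‖xh‖ ^ 2 = dotProduct x x := by rw [euclid_norm_sq]; simp [hxh]
  rw [h1, ← h2]
  calc |⟪toEuclideanCLM (𝕜 := ℝ) M xh, xh⟫| ≤ ‖toEuclideanCLM (𝕜 := ℝ) M xh‖ * ‖xh‖ :=
        abs_real_inner_le_norm _ _
    _ ≤ ‖toEuclideanCLM (𝕜 := ℝ) M‖ * ‖xh‖ * ‖xh‖ := by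
        gcongr; exact (toEuclideanCLM (𝕜 := ℝ) M).le_opNorm xh
    _ = ‖M‖ * ‖xh‖ ^ 2 := by rw [← Matrix.cstar_norm_def]; ring

lemma key_identity (τ : ℝ) (P P' L : Matrix (Fin n) (Fin n) ℝ) (B : Matrix (Fin n) (Fin d) ℝ)
    (S S' : Matrix (Fin d) (Fin d) ℝ)
    (hPT : Pᵀ = P) (hP'T : P'ᵀ = P')
    (hSiT : S⁻¹ᵀ = S⁻¹) (hS'iT : S'⁻¹ᵀ = S'⁻¹)
    (hS1 : S * S⁻¹ = 1) (hS2 : S⁻¹ * S = 1) (hS1' : S' * S'⁻¹ = 1) (hS2' : S'⁻¹ * S' = 1)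
    (hdiff : S = S' + τ • (Bᵀ * (P * B)) - τ • (Bᵀ * (P' * B))) :
    (Lᵀ * P * L - Lᵀ * P * (τ • B) * S⁻¹ * Bᵀ * P * L)
      - (Lᵀ * P' * L - Lᵀ * P' * (τ • B) * S'⁻¹ * Bᵀ * P' * L)
    = (L - τ • (B * (S'⁻¹ * (Bᵀ * (P' * L)))))ᵀ * (P - P')
        * (L - τ • (B * (S'⁻¹ * (Bᵀ * (P' * L)))))
      - τ • (((S⁻¹ * (Bᵀ * (P * L))) - (S'⁻¹ * (Bᵀ * (P' * L))))ᵀ *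
          (S * ((S⁻¹ * (Bᵀ * (P * L))) - (S'⁻¹ * (Bᵀ * (P' * L)))))) := by
  set K : Matrix (Fin d) (Fin n) ℝ := S⁻¹ * (Bᵀ * (P * L)) with hK
  set K' : Matrix (Fin d) (Fin n) ℝ := S'⁻¹ * (Bᵀ * (P' * L)) with hK'
  have hSK : S * K = Bᵀ * (P * L) := by rw [hK, ← Matrix.mul_assoc, hS1, Matrix.one_mul]
  have hS'K' : S' * K' = Bᵀ * (P' * L) := by rw [hK', ← Matrix.mul_assoc, hS1', Matrix.one_mul]
  have hKS : Kᵀ * S = Lᵀ * (P * B) := by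
    rw [hK]
    simp only [transpose_mul, transpose_transpose, hSiT, hPT, Matrix.mul_assoc, hS2,
      Matrix.mul_one]
  have hK'S' : K'ᵀ * S' = Lᵀ * (P' * B) := by
    rw [hK']
    simp only [transpose_mul, transpose_transpose, hS'iT, hP'T, Matrix.mul_assoc, hS2',
      Matrix.mul_one]
  have e1 : Lᵀ * P * (τ • B) * S⁻¹ * Bᵀ * P * L = τ • (Kᵀ * (Bᵀ * (P * L))) := by
    rw [hK]
    simp only [transpose_mul, transpose_transpose, hSiT, hPT, Matrix.smul_mul,
      Matrix.mul_smul, Matrix.mul_assoc]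
  have e2 : Lᵀ * P' * (τ • B) * S'⁻¹ * Bᵀ * P' * L = τ • (K'ᵀ * (Bᵀ * (P' * L))) := by
    rw [hK']
    simp only [transpose_mul, transpose_transpose, hS'iT, hP'T, Matrix.smul_mul,
      Matrix.mul_smul, Matrix.mul_assoc]
  have e3 : Kᵀ * (S * K) = Kᵀ * (Bᵀ * (P * L)) := by rw [hSK]
  have e4 : Kᵀ * (S * K') = Lᵀ * (P * (B * K')) := by
    rw [← Matrix.mul_assoc, hKS, Matrix.mul_assoc, Matrix.mul_assoc]
  have e5 : K'ᵀ * (S * K) = K'ᵀ * (Bᵀ * (P * L)) := by rw [hSK]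
  have hSK' : S * K' = Bᵀ * (P' * L) + τ • (Bᵀ * (P * (B * K')))
      - τ • (Bᵀ * (P' * (B * K'))) := by
    rw [hdiff, Matrix.sub_mul, Matrix.add_mul, hS'K']
    simp only [Matrix.smul_mul, Matrix.mul_assoc]
  have e6 : K'ᵀ * (S * K') = K'ᵀ * (Bᵀ * (P' * L)) + τ • (K'ᵀ * (Bᵀ * (P * (B * K'))))
      - τ • (K'ᵀ * (Bᵀ * (P' * (B * K')))) := by
    rw [hSK', Matrix.mul_sub, Matrix.mul_add, Matrix.mul_smul, Matrix.mul_smul]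
  have e7 : Lᵀ * (P' * (B * K')) = K'ᵀ * (Bᵀ * (P' * L)) := by
    calc Lᵀ * (P' * (B * K')) = (K'ᵀ * S') * K' := by
          rw [hK'S']; simp only [Matrix.mul_assoc]
      _ = K'ᵀ * (S' * K') := by rw [Matrix.mul_assoc]
      _ = K'ᵀ * (Bᵀ * (P' * L)) := by rw [hS'K']
  have eD : (K - K')ᵀ * (S * (K - K'))
      = Kᵀ * (S * K) - Kᵀ * (S * K') - K'ᵀ * (S * K) + K'ᵀ * (S * K') := by
    simp only [transpose_sub, Matrix.mul_sub, Matrix.sub_mul]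
    abel
  rw [e1, e2, eD, e3, e4, e5, e6]
  simp only [transpose_sub, transpose_smul, transpose_mul, transpose_transpose,
    Matrix.sub_mul, Matrix.mul_sub, Matrix.add_mul, Matrix.mul_add,
    Matrix.smul_mul, Matrix.mul_smul, smul_sub, smul_add, smul_smul, Matrix.mul_assoc, e7,
    hPT, hP'T]
  module

lemma psd_quad_nonneg {M : Matrix (Fin d) (Fin d) ℝ} (hM : M.PosSemidef) (x : Fin d → ℝ) :
    0 ≤ dotProduct x (M *ᵥ x) := by simpa using hM.dotProduct_mulVec_nonneg x

lemma transpose_eq_of_hermitian {M : Matrix (Fin d) (Fin d) ℝ} (hM : M.IsHermitian) :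
    Mᵀ = M := by rw [← conjTranspose_eq_transpose_of_trivial]; exact hM

lemma dot_mulVec_symm {M : Matrix (Fin d) (Fin d) ℝ} (hM : Mᵀ = M) (a b : Fin d → ℝ) :
    dotProduct a (M *ᵥ b) = dotProduct b (M *ᵥ a) := by
  rw [Matrix.dotProduct_mulVec, ← Matrix.mulVec_transpose, hM, dotProduct_comm]

lemma psd_cauchy_schwarz {M : Matrix (Fin d) (Fin d) ℝ} (hM : M.PosSemidef) (a b : Fin d → ℝ) :
    (dotProduct a (M *ᵥ b)) ^ 2
      ≤ (dotProduct a (M *ᵥ a)) * (dotProduct b (M *ᵥ b)) := by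
  have hMT : Mᵀ = M := transpose_eq_of_hermitian hM.1
  have key : ∀ t : ℝ, 0 ≤ (dotProduct b (M *ᵥ b)) * (t * t)
      + (2 * dotProduct a (M *ᵥ b)) * t + dotProduct a (M *ᵥ a) := by
    intro t
    have h := psd_quad_nonneg hM (a + t • b)
    have hsym := dot_mulVec_symm hMT a b
    simp only [Matrix.mulVec_add, Matrix.mulVec_smul, dotProduct_add,
      add_dotProduct, dotProduct_smul, smul_dotProduct,
      smul_eq_mul] at h
    rw [← hsym] at h
    nlinarith [h]
  have hd := discrim_le_zero key
  rw [discrim] at hd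
  nlinarith [hd]

lemma inv_quad_le {R D : Matrix (Fin d) (Fin d) ℝ} (hR : R.PosDef) (hD : D.PosSemidef)
    (x : Fin d → ℝ) :
    dotProduct x ((R + D)⁻¹ *ᵥ x) ≤ dotProduct x (R⁻¹ *ᵥ x) := by
  have hS : (R + D).PosDef := hR.add_posSemidef hD
  have hRinv : (R⁻¹).PosDef := hR.inv
  have hRT : Rᵀ = R := transpose_eq_of_hermitian hR.1
  have hR1 : R * R⁻¹ = 1 := Matrix.mul_nonsing_inv R hR.det_pos.ne'.isUnit
  have hS1 : (R + D) * (R + D)⁻¹ = 1 := Matrix.mul_nonsing_inv _ hS.det_pos.ne'.isUnit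
  set y : Fin d → ℝ := (R + D)⁻¹ *ᵥ x with hy
  have hxy : (R + D) *ᵥ y = x := by
    rw [hy, Matrix.mulVec_mulVec, hS1, Matrix.one_mulVec]
  have hq1 : dotProduct x y = dotProduct y ((R + D) *ᵥ y) := by
    rw [hxy, dotProduct_comm]
  set u : Fin d → ℝ := R⁻¹ *ᵥ x with hu
  have hRu : R *ᵥ u = x := by rw [hu, Matrix.mulVec_mulVec, hR1, Matrix.one_mulVec]
  have cs := psd_cauchy_schwarz hR.posSemidef u y
  have h1 : dotProduct u (R *ᵥ y) = dotProduct x y := by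
    rw [dot_mulVec_symm hRT u y, hRu, dotProduct_comm]
  have h2 : dotProduct u (R *ᵥ u) = dotProduct x u := by
    rw [hRu, dotProduct_comm]
  rw [h1, h2] at cs
  have h3 : dotProduct y (R *ᵥ y) ≤ dotProduct x y := by
    rw [hq1]
    have := psd_quad_nonneg hD y
    simp only [Matrix.add_mulVec, dotProduct_add]
    linarith
  have h4 : 0 ≤ dotProduct x y := by
    rw [hq1]; exact psd_quad_nonneg hS.posSemidef y
  rcases eq_or_lt_of_le h4 with h0 | h0
  · rw [← h0]
    exact psd_quad_nonneg hRinv.posSemidef x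
  · have h6 : 0 ≤ dotProduct x u := by
      rw [hu]; exact psd_quad_nonneg hRinv.posSemidef x
    have h7 : dotProduct x y * dotProduct x y
        ≤ dotProduct x u * dotProduct x y := by
      nlinarith [cs, mul_le_mul_of_nonneg_left h3 h6]
    exact le_of_mul_le_mul_right h7 h0

lemma psd_smul {M : Matrix (Fin d) (Fin d) ℝ} (hM : M.PosSemidef) {c : ℝ} (hc : 0 ≤ c) :
    (c • M).PosSemidef := by
  exact hM.smul hc

lemma psd_conj {P : Matrix (Fin n) (Fin n) ℝ} (hP : P.PosSemidef)
    (B : Matrix (Fin n) (Fin d) ℝ) : (Bᵀ * P * B).PosSemidef := by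
  have := hP.conjTranspose_mul_mul_same B
  rwa [conjTranspose_eq_transpose_of_trivial] at this

lemma dot_conj {m k : ℕ} (E : Matrix (Fin k) (Fin m) ℝ) (W : Matrix (Fin k) (Fin k) ℝ)
    (x : Fin m → ℝ) :
    dotProduct x ((Eᵀ * (W * E)) *ᵥ x)
      = dotProduct (E *ᵥ x) (W *ᵥ (E *ᵥ x)) := by
  rw [← Matrix.mulVec_mulVec, Matrix.dotProduct_mulVec, Matrix.vecMul_transpose,
    Matrix.mulVec_mulVec]

lemma norm_one_le_mat : ‖(1 : Matrix (Fin n) (Fin n) ℝ)‖ ≤ 1 := by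
  rw [Matrix.cstar_norm_def, _root_.map_one]
  exact ContinuousLinearMap.norm_id_le

lemma norm_transpose_mat (B : Matrix (Fin n) (Fin d) ℝ) : ‖Bᵀ‖ = ‖B‖ := by
  rw [← conjTranspose_eq_transpose_of_trivial]
  exact Matrix.l2_opNorm_conjTranspose B

lemma norm_transpose_mul_self (F : Matrix (Fin n) (Fin n) ℝ) : ‖Fᵀ * F‖ = ‖F‖ * ‖F‖ := by
  rw [← conjTranspose_eq_transpose_of_trivial]
  exact Matrix.l2_opNorm_conjTranspose_mul_self F

end Aux

lemma dot_self_nonneg {m : ℕ} (x : Fin m → ℝ) : 0 ≤ dotProduct x x :=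
  Finset.sum_nonneg fun i _ => mul_self_nonneg (x i)

/-- The one-step Riccati operator is Lipschitz on positive semidefinite
matrices: `‖Γ(P) - Γ(P')‖₂ ≤ (1 + τ‖R⁻¹‖₂‖B‖₂² max{‖P‖₂,‖P'‖₂})² (1 + τ‖A‖₂)² ‖P - P'‖₂`. -/
theorem riccatiStep_lipschitz {n d : ℕ} (τ : ℝ) (hτ : 0 < τ)
    (Q A : Matrix (Fin n) (Fin n) ℝ) (R : Matrix (Fin d) (Fin d) ℝ)
    (B : Matrix (Fin n) (Fin d) ℝ) (hQ : Q.PosDef) (hR : R.PosDef)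
    (P P' : Matrix (Fin n) (Fin n) ℝ) (hP : P.PosSemidef) (hP' : P'.PosSemidef) :
    sNorm (riccatiStep τ Q A R B P - riccatiStep τ Q A R B P') ≤
      (1 + τ * sNorm R⁻¹ * sNorm B ^ 2 * max (sNorm P) (sNorm P')) ^ 2 *
        (1 + τ * sNorm A) ^ 2 * sNorm (P - P') := by
  simp only [sNorm_eq]
  have hτ0 : 0 ≤ τ := hτ.le
  have hPT : Pᵀ = P := transpose_eq_of_hermitian hP.1
  have hP'T : P'ᵀ = P' := transpose_eq_of_hermitian hP'.1
  set S : Matrix (Fin d) (Fin d) ℝ := R + τ • (Bᵀ * P * B) with hSdef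
  set S' : Matrix (Fin d) (Fin d) ℝ := R + τ • (Bᵀ * P' * B) with hS'def
  have hSpd : S.PosDef := hR.add_posSemidef (psd_smul (psd_conj hP B) hτ0)
  have hS'pd : S'.PosDef := hR.add_posSemidef (psd_smul (psd_conj hP' B) hτ0)
  have hST : Sᵀ = S := transpose_eq_of_hermitian hSpd.1
  have hS'T : S'ᵀ = S' := transpose_eq_of_hermitian hS'pd.1
  have hS1 : S * S⁻¹ = 1 := Matrix.mul_nonsing_inv _ hSpd.det_pos.ne'.isUnit
  have hS2 : S⁻¹ * S = 1 := Matrix.nonsing_inv_mul _ hSpd.det_pos.ne'.isUnit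
  have hS1' : S' * S'⁻¹ = 1 := Matrix.mul_nonsing_inv _ hS'pd.det_pos.ne'.isUnit
  have hS2' : S'⁻¹ * S' = 1 := Matrix.nonsing_inv_mul _ hS'pd.det_pos.ne'.isUnit
  have hSiT : S⁻¹ᵀ = S⁻¹ := by rw [Matrix.transpose_nonsing_inv, hST]
  have hS'iT : S'⁻¹ᵀ = S'⁻¹ := by rw [Matrix.transpose_nonsing_inv, hS'T]
  clear_value S S'
  set L : Matrix (Fin n) (Fin n) ℝ := 1 + τ • A with hLdef
  set K : Matrix (Fin d) (Fin n) ℝ := S⁻¹ * (Bᵀ * (P * L)) with hKdef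
  set K' : Matrix (Fin d) (Fin n) ℝ := S'⁻¹ * (Bᵀ * (P' * L)) with hK'def
  set F : Matrix (Fin n) (Fin n) ℝ := L - τ • (B * K') with hFdef
  set F' : Matrix (Fin n) (Fin n) ℝ := L - τ • (B * K) with hF'def
  set G : Matrix (Fin n) (Fin n) ℝ := riccatiStep τ Q A R B P - riccatiStep τ Q A R B P'
    with hGdef
  clear_value L K K' F F' G
  -- the two identities
  have hId1 : G = Fᵀ * (P - P') * F - τ • ((K - K')ᵀ * (S * (K - K'))) := by
    have h0 : G = (Lᵀ * P * L - Lᵀ * P * (τ • B) * S⁻¹ * Bᵀ * P * L)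
        - (Lᵀ * P' * L - Lᵀ * P' * (τ • B) * S'⁻¹ * Bᵀ * P' * L) := by
      rw [hGdef]
      simp only [riccatiStep]
      rw [← hSdef, ← hS'def, ← hLdef]
      abel
    rw [h0, hFdef, hKdef, hK'def]
    exact key_identity τ P P' L B S S' hPT hP'T hSiT hS'iT hS1 hS2 hS1' hS2'
      (by rw [hSdef, hS'def]; simp only [Matrix.mul_assoc]; abel)
  have hId2 : riccatiStep τ Q A R B P' - riccatiStep τ Q A R B P
      = F'ᵀ * (P' - P) * F' - τ • ((K' - K)ᵀ * (S' * (K' - K))) := by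
    have h0 : riccatiStep τ Q A R B P' - riccatiStep τ Q A R B P
        = (Lᵀ * P' * L - Lᵀ * P' * (τ • B) * S'⁻¹ * Bᵀ * P' * L)
        - (Lᵀ * P * L - Lᵀ * P * (τ • B) * S⁻¹ * Bᵀ * P * L) := by
      simp only [riccatiStep]
      rw [← hSdef, ← hS'def, ← hLdef]
      abel
    rw [h0, hF'def, hKdef, hK'def]
    exact key_identity τ P' P L B S' S hP'T hPT hS'iT hSiT hS1' hS2' hS1 hS2
      (by rw [hSdef, hS'def]; simp only [Matrix.mul_assoc]; abel)
  -- norm bounds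
  have hSinv_le : ‖S⁻¹‖ ≤ ‖R⁻¹‖ := by
    refine sym_norm_le _ hSiT (norm_nonneg _) (fun x => ?_)
    have hpos : 0 ≤ dotProduct x (S⁻¹ *ᵥ x) :=
      psd_quad_nonneg hSpd.inv.posSemidef x
    rw [abs_of_nonneg hpos]
    calc dotProduct x (S⁻¹ *ᵥ x) ≤ dotProduct x (R⁻¹ *ᵥ x) := by
          rw [hSdef]; exact inv_quad_le hR (psd_smul (psd_conj hP B) hτ0) x
      _ ≤ |dotProduct x (R⁻¹ *ᵥ x)| := le_abs_self _
      _ ≤ ‖R⁻¹‖ * dotProduct x x := abs_quad_le _ _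
  have hS'inv_le : ‖S'⁻¹‖ ≤ ‖R⁻¹‖ := by
    refine sym_norm_le _ hS'iT (norm_nonneg _) (fun x => ?_)
    have hpos : 0 ≤ dotProduct x (S'⁻¹ *ᵥ x) :=
      psd_quad_nonneg hS'pd.inv.posSemidef x
    rw [abs_of_nonneg hpos]
    calc dotProduct x (S'⁻¹ *ᵥ x) ≤ dotProduct x (R⁻¹ *ᵥ x) := by
          rw [hS'def]; exact inv_quad_le hR (psd_smul (psd_conj hP' B) hτ0) x
      _ ≤ |dotProduct x (R⁻¹ *ᵥ x)| := le_abs_self _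
      _ ≤ ‖R⁻¹‖ * dotProduct x x := abs_quad_le _ _
  set cmax : ℝ := max ‖P‖ ‖P'‖ with hcmax
  set c1 : ℝ := 1 + τ * ‖R⁻¹‖ * ‖B‖ ^ 2 * cmax with hc1
  set c2 : ℝ := 1 + τ * ‖A‖ with hc2
  clear_value cmax c1 c2
  have hcm0 : (0:ℝ) ≤ cmax := le_trans (norm_nonneg P) (by rw [hcmax]; exact le_max_left _ _)
  have hc1n : 0 ≤ c1 := by
    have h := mul_nonneg (mul_nonneg (mul_nonneg hτ0 (norm_nonneg R⁻¹))
      (sq_nonneg ‖B‖)) hcm0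
    rw [hc1]; linarith [h]
  have hc2n : 0 ≤ c2 := by
    have : (0:ℝ) ≤ τ * ‖A‖ := mul_nonneg hτ0 (norm_nonneg _)
    rw [hc2]; linarith
  have hLn : ‖L‖ ≤ c2 := by
    rw [hLdef, hc2]
    calc ‖(1 : Matrix (Fin n) (Fin n) ℝ) + τ • A‖ ≤ ‖(1 : Matrix (Fin n) (Fin n) ℝ)‖ + ‖τ • A‖ :=
          norm_add_le _ _
      _ ≤ 1 + τ * ‖A‖ := by
          rw [norm_smul, Real.norm_eq_abs, abs_of_nonneg hτ0]
          exact add_le_add norm_one_le_mat le_rfl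
  have hgen : ∀ (Pv : Matrix (Fin n) (Fin n) ℝ) (Sv : Matrix (Fin d) (Fin d) ℝ),
      ‖Sv⁻¹‖ ≤ ‖R⁻¹‖ → ‖Pv‖ ≤ cmax →
      ‖L - τ • (B * (Sv⁻¹ * (Bᵀ * (Pv * L))))‖ ≤ c1 * c2 := by
    intro Pv Sv h1 h2
    have hfac : L - τ • (B * (Sv⁻¹ * (Bᵀ * (Pv * L))))
        = (1 - τ • (B * (Sv⁻¹ * (Bᵀ * Pv)))) * L := by
      simp only [Matrix.sub_mul, Matrix.one_mul, Matrix.smul_mul, Matrix.mul_assoc]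
    have hMn : ‖B * (Sv⁻¹ * (Bᵀ * Pv))‖ ≤ ‖R⁻¹‖ * ‖B‖ ^ 2 * cmax := by
      have h3 : ‖Bᵀ * Pv‖ ≤ ‖B‖ * cmax := by
        calc ‖Bᵀ * Pv‖ ≤ ‖Bᵀ‖ * ‖Pv‖ := Matrix.l2_opNorm_mul _ _
          _ = ‖B‖ * ‖Pv‖ := by rw [norm_transpose_mat]
          _ ≤ ‖B‖ * cmax := mul_le_mul_of_nonneg_left h2 (norm_nonneg _)
      have h4 : ‖Sv⁻¹ * (Bᵀ * Pv)‖ ≤ ‖R⁻¹‖ * (‖B‖ * cmax) := by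
        calc ‖Sv⁻¹ * (Bᵀ * Pv)‖ ≤ ‖Sv⁻¹‖ * ‖Bᵀ * Pv‖ := Matrix.l2_opNorm_mul _ _
          _ ≤ ‖R⁻¹‖ * (‖B‖ * cmax) :=
              mul_le_mul h1 h3 (norm_nonneg _) (norm_nonneg _)
      calc ‖B * (Sv⁻¹ * (Bᵀ * Pv))‖ ≤ ‖B‖ * ‖Sv⁻¹ * (Bᵀ * Pv)‖ := Matrix.l2_opNorm_mul _ _
        _ ≤ ‖B‖ * (‖R⁻¹‖ * (‖B‖ * cmax)) := mul_le_mul_of_nonneg_left h4 (norm_nonneg _)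
        _ = ‖R⁻¹‖ * ‖B‖ ^ 2 * cmax := by ring
    have hfirst : ‖(1 : Matrix (Fin n) (Fin n) ℝ) - τ • (B * (Sv⁻¹ * (Bᵀ * Pv)))‖ ≤ c1 := by
      calc ‖(1 : Matrix (Fin n) (Fin n) ℝ) - τ • (B * (Sv⁻¹ * (Bᵀ * Pv)))‖
          ≤ ‖(1 : Matrix (Fin n) (Fin n) ℝ)‖ + ‖τ • (B * (Sv⁻¹ * (Bᵀ * Pv)))‖ :=
            norm_sub_le _ _
        _ ≤ 1 + τ * (‖R⁻¹‖ * ‖B‖ ^ 2 * cmax) := by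
            rw [norm_smul, Real.norm_eq_abs, abs_of_nonneg hτ0]
            exact add_le_add norm_one_le_mat (mul_le_mul_of_nonneg_left hMn hτ0)
        _ = c1 := by rw [hc1]; ring
    rw [hfac]
    calc ‖(1 - τ • (B * (Sv⁻¹ * (Bᵀ * Pv)))) * L‖
        ≤ ‖(1 : Matrix (Fin n) (Fin n) ℝ) - τ • (B * (Sv⁻¹ * (Bᵀ * Pv)))‖ * ‖L‖ :=
          Matrix.l2_opNorm_mul _ _
      _ ≤ c1 * c2 := mul_le_mul hfirst hLn (norm_nonneg _) hc1n
  have hFn : ‖F‖ ≤ c1 * c2 := by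
    rw [hFdef, hK'def]
    exact hgen P' S' hS'inv_le (by rw [hcmax]; exact le_max_right _ _)
  have hF'n : ‖F'‖ ≤ c1 * c2 := by
    rw [hF'def, hKdef]
    exact hgen P S hSinv_le (by rw [hcmax]; exact le_max_left _ _)
  -- symmetry of G
  have hGT : Gᵀ = G := by
    rw [hId1]
    simp only [transpose_sub, transpose_smul, transpose_mul, transpose_transpose,
      hPT, hP'T, hST, Matrix.mul_assoc]
  -- quadratic bound, generic in the side
  have hone : ∀ (Fv : Matrix (Fin n) (Fin n) ℝ) (Sv : Matrix (Fin d) (Fin d) ℝ)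
      (Kv : Matrix (Fin d) (Fin n) ℝ) (Pd : Matrix (Fin n) (Fin n) ℝ) (x : Fin n → ℝ),
      Sv.PosSemidef → ‖Fv‖ ≤ c1 * c2 →
      dotProduct x ((Fvᵀ * Pd * Fv - τ • (Kvᵀ * (Sv * Kv))) *ᵥ x)
        ≤ ((c1 * c2) ^ 2 * ‖Pd‖) * dotProduct x x := by
    intro Fv Sv Kv Pd x hSv hFv
    have hsplit : dotProduct x ((Fvᵀ * Pd * Fv - τ • (Kvᵀ * (Sv * Kv))) *ᵥ x)
        = dotProduct x ((Fvᵀ * Pd * Fv) *ᵥ x)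
          - τ * dotProduct x ((Kvᵀ * (Sv * Kv)) *ᵥ x) := by
      rw [Matrix.sub_mulVec, dotProduct_sub, smul_mulVec,
        dotProduct_smul, smul_eq_mul]
    have hterm2 : 0 ≤ dotProduct x ((Kvᵀ * (Sv * Kv)) *ᵥ x) := by
      rw [dot_conj]; exact psd_quad_nonneg hSv _
    have hFF : dotProduct (Fv *ᵥ x) (Fv *ᵥ x)
        = dotProduct x ((Fvᵀ * Fv) *ᵥ x) := by
      have h := dot_conj Fv 1 x
      rw [Matrix.one_mul, Matrix.one_mulVec] at h
      exact h.symm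
    have hFFle : dotProduct (Fv *ᵥ x) (Fv *ᵥ x)
        ≤ (c1 * c2) ^ 2 * dotProduct x x := by
      rw [hFF]
      calc dotProduct x ((Fvᵀ * Fv) *ᵥ x)
          ≤ |dotProduct x ((Fvᵀ * Fv) *ᵥ x)| := le_abs_self _
        _ ≤ ‖Fvᵀ * Fv‖ * dotProduct x x := abs_quad_le _ _
        _ ≤ (c1 * c2) ^ 2 * dotProduct x x := by
            rw [norm_transpose_mul_self]
            have h0 : (0:ℝ) ≤ ‖Fv‖ := norm_nonneg _
            have : ‖Fv‖ * ‖Fv‖ ≤ (c1 * c2) ^ 2 := by nlinarith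
            exact mul_le_mul_of_nonneg_right this (dot_self_nonneg x)
    have hterm1 : dotProduct x ((Fvᵀ * Pd * Fv) *ᵥ x)
        ≤ ‖Pd‖ * ((c1 * c2) ^ 2 * dotProduct x x) := by
      have h1 : dotProduct x ((Fvᵀ * Pd * Fv) *ᵥ x)
          = dotProduct (Fv *ᵥ x) (Pd *ᵥ (Fv *ᵥ x)) := by
        rw [Matrix.mul_assoc, dot_conj]
      rw [h1]
      calc dotProduct (Fv *ᵥ x) (Pd *ᵥ (Fv *ᵥ x))
          ≤ |dotProduct (Fv *ᵥ x) (Pd *ᵥ (Fv *ᵥ x))| := le_abs_self _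
        _ ≤ ‖Pd‖ * dotProduct (Fv *ᵥ x) (Fv *ᵥ x) := abs_quad_le _ _
        _ ≤ ‖Pd‖ * ((c1 * c2) ^ 2 * dotProduct x x) :=
            mul_le_mul_of_nonneg_left hFFle (norm_nonneg _)
    rw [hsplit]
    have h5 := mul_nonneg hτ0 hterm2
    have h6 : ‖Pd‖ * ((c1 * c2) ^ 2 * dotProduct x x)
        = ((c1 * c2) ^ 2 * ‖Pd‖) * dotProduct x x := by ring
    linarith [hterm1]
  -- combine
  have hkey : ∀ x : Fin n → ℝ, |dotProduct x (G *ᵥ x)|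
      ≤ ((c1 * c2) ^ 2 * ‖P - P'‖) * dotProduct x x := by
    intro x
    rw [abs_le]
    constructor
    · have h := hone F' S' (K' - K) (P' - P) x hS'pd.posSemidef hF'n
      rw [← hId2] at h
      have hneg : dotProduct x ((riccatiStep τ Q A R B P' - riccatiStep τ Q A R B P) *ᵥ x)
          = -dotProduct x (G *ᵥ x) := by
        rw [hGdef]
        rw [show riccatiStep τ Q A R B P' - riccatiStep τ Q A R B P
            = -(riccatiStep τ Q A R B P - riccatiStep τ Q A R B P') by abel]
        rw [Matrix.neg_mulVec, dotProduct_neg]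
      rw [hneg, norm_sub_rev P' P] at h
      linarith
    · have h := hone F S (K - K') (P - P') x hSpd.posSemidef hFn
      rw [← hId1] at h
      exact h
  have hcn : 0 ≤ (c1 * c2) ^ 2 * ‖P - P'‖ :=
    mul_nonneg (sq_nonneg _) (norm_nonneg _)
  calc ‖G‖ ≤ (c1 * c2) ^ 2 * ‖P - P'‖ := sym_norm_le G hGT hcn hkey
    _ = c1 ^ 2 * c2 ^ 2 * ‖P - P'‖ := by ring
end
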